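/- Let q be a prime power, l ≥ 1, and tr: 𝔽_{q^l} → 𝔽_q the relative trace. Then R = {x ∈ 𝔽_{q^l}^* : tr(x) = 1} is a ((q^l-1)/(q-1), q-1, q^{l-1}, q^{l-2})-relative difference set in the multiplicative group 𝔽_{q^l}^* relative to the subgroup 𝔽_q^*; that is, in ℤ[𝔽_{q^l}^*], R R^{(-1)} = q^{l-1}·1 + q^{l-2}(𝔽_{q^l}^* - 𝔽_q^*). -/

import Mathlib

set_option linter.unusedSectionVars false
set_option linter.unusedVariables false
set_option maxHeartbeats 1000000

open Finset
open scoped Pointwise Classical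

/-- The formal sum `∑_{x ∈ s} x` of a finite subset of a group in the
integral group ring `ℤ[G]`. -/
noncomputable def fsum {G : Type*} [Group G] [DecidableEq G] (s : Finset G) :
    MonoidAlgebra ℤ G :=
  ∑ x ∈ s, MonoidAlgebra.single x 1

/-- The relative trace `x ↦ ∑_{i<l} x^{q^i}`. -/
def relTrace {F : Type*} [CommRing F] (q l : ℕ) (x : F) : F :=
  ∑ i ∈ Finset.range l, x ^ q ^ i

/-- The Singer relative difference set `{x ∈ F^* : tr(x) = 1}`. -/
noncomputable def singerRDS (F : Type*) [Field F] [Fintype F] (q l : ℕ) :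
    Finset Fˣ :=
  (univ : Finset Fˣ).filter (fun x : Fˣ => relTrace q l (x : F) = 1)

/-- The subgroup `𝔽_q^*` of `𝔽_{q^l}^*`, as a finset of units. -/
noncomputable def baseUnits (K F : Type*) [Field K] [Field F] [Fintype K]
    [Fintype F] [Algebra K F] : Finset Fˣ :=
  (univ : Finset Fˣ).filter (fun x => ∃ y : K, algebraMap K F y = (x : F))

section Aux
open Polynomial
variable {F : Type*} [Field F] [Fintype F] {q l : ℕ}

/-- powers of fixed elements -/
lemma fix_pow_pow {a : F} (ha : a ^ q = a) (i : ℕ) : a ^ q ^ i = a := by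
  induction i with
  | zero => simp
  | succ n ih => rw [pow_succ, pow_mul, ih, ha]

lemma frob_pow_add (hfrob : ∀ x y : F, (x + y) ^ q = x ^ q + y ^ q) (i : ℕ)
    (x y : F) : (x + y) ^ q ^ i = x ^ q ^ i + y ^ q ^ i := by
  induction i with
  | zero => simp
  | succ n ih => rw [pow_succ, pow_mul, pow_mul, pow_mul, ih, hfrob]

lemma frob_sub (hfrob : ∀ x y : F, (x + y) ^ q = x ^ q + y ^ q)
    (x y : F) : (x - y) ^ q = x ^ q - y ^ q :=
  map_sub (AddMonoidHom.mk' (· ^ q) hfrob) x y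

lemma frob_sum (hfrob : ∀ x y : F, (x + y) ^ q = x ^ q + y ^ q)
    {ι : Type*} (s : Finset ι) (f : ι → F) :
    (∑ i ∈ s, f i) ^ q = ∑ i ∈ s, (f i) ^ q :=
  map_sum (AddMonoidHom.mk' (· ^ q) hfrob) f s

lemma tr_add (hfrob : ∀ x y : F, (x + y) ^ q = x ^ q + y ^ q) (x y : F) :
    relTrace q l (x + y) = relTrace q l x + relTrace q l y := by
  simp only [relTrace, ← Finset.sum_add_distrib]
  exact Finset.sum_congr rfl fun i _ => frob_pow_add hfrob i x y

lemma tr_zero (hq2 : 2 ≤ q) : relTrace q l (0 : F) = 0 := by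
  simp only [relTrace]
  refine Finset.sum_eq_zero fun i _ => ?_
  exact zero_pow (pow_ne_zero i (by omega))

lemma tr_sub (hfrob : ∀ x y : F, (x + y) ^ q = x ^ q + y ^ q) (x y : F) :
    relTrace q l (x - y) = relTrace q l x - relTrace q l y :=
  map_sub (AddMonoidHom.mk' (relTrace q l) (tr_add hfrob)) x y

lemma tr_smul {a : F} (ha : a ^ q = a) (x : F) :
    relTrace q l (a * x) = a * relTrace q l x := by
  simp only [relTrace, Finset.mul_sum]
  exact Finset.sum_congr rfl fun i _ => by rw [mul_pow, fix_pow_pow ha]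

lemma tr_fix (hfrob : ∀ x y : F, (x + y) ^ q = x ^ q + y ^ q)
    (hcard : Fintype.card F = q ^ l) (x : F) :
    (relTrace q l x) ^ q = relTrace q l x := by
  rw [relTrace, frob_sum hfrob]
  have key : ∀ i, (x ^ q ^ i) ^ q = x ^ q ^ (i + 1) := fun i => by
    rw [← pow_mul, ← pow_succ]
  simp only [key]
  have h1 : ∑ i ∈ Finset.range l, x ^ q ^ (i + 1)
      = (∑ i ∈ Finset.range l, x ^ q ^ i) + x ^ q ^ l - x := by
    have := Finset.sum_range_succ' (fun i => x ^ q ^ i) l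
    rw [Finset.sum_range_succ] at this
    simp only [pow_zero, pow_one] at this
    linear_combination -this
  rw [h1, ← hcard, FiniteField.pow_card]
  simp [relTrace]

/-- if `tr(c·x) = 0` for all `x`, then `c = 0`. -/
lemma trc_zero (hq2 : 2 ≤ q) (hl : 1 ≤ l) (hcard : Fintype.card F = q ^ l)
    {c : F} (hc : ∀ x : F, relTrace q l (c * x) = 0) : c = 0 := by
  by_contra hc0
  set P : F[X] := ∑ i ∈ Finset.range l, C (c ^ q ^ i) * X ^ q ^ i with hP
  have heval : ∀ x : F, P.eval x = relTrace q l (c * x) := by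
    intro x
    simp [hP, relTrace, eval_finset_sum, mul_pow]
  have hroots : ∀ x : F, P.eval x = 0 := fun x => by rw [heval]; exact hc x
  have hPne : P ≠ 0 := by
    intro h0
    have h1 : P.coeff 1 = c := by
      rw [hP]
      rw [finset_sum_coeff]
      rw [Finset.sum_eq_single 0]
      · simp
      · intro i _ hi
        have hne : q ^ i ≠ 1 := by
          have : q ^ i ≥ q ^ 1 := Nat.pow_le_pow_right (by omega) (by omega)
          simp at this; omega
        rw [coeff_C_mul, coeff_X_pow, if_neg (fun h => hne h.symm), mul_zero]
      · intro h; simp at h; omega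
    rw [h0] at h1
    simp at h1
    exact hc0 h1.symm
  have hdeg : P.natDegree ≤ q ^ (l - 1) := by
    refine (natDegree_sum_le _ _).trans ?_
    rw [Finset.fold_max_le]
    constructor
    · positivity
    · intro i hi
      refine (natDegree_C_mul_le _ _).trans ?_
      rw [natDegree_X_pow]
      exact Nat.pow_le_pow_right (by omega) (by simp at hi; omega)
  have hsub : (univ : Finset F) ⊆ P.roots.toFinset := by
    intro x _
    simp only [Multiset.mem_toFinset, mem_roots, hPne, ne_eq, not_false_eq_true, true_and]
    exact hroots x
  have hle : Fintype.card F ≤ q ^ (l - 1) := by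
    calc Fintype.card F = (univ : Finset F).card := rfl
      _ ≤ P.roots.toFinset.card := Finset.card_le_card hsub
      _ ≤ Multiset.card P.roots := Multiset.toFinset_card_le _
      _ ≤ P.natDegree := card_roots' P
      _ ≤ q ^ (l - 1) := hdeg
  rw [hcard] at hle
  have : q ^ (l - 1) < q ^ l := Nat.pow_lt_pow_right (by omega) (by omega)
  omega

/-- equal fiber cardinalities for additive maps -/
lemma fiber_card_eq {M : Type*} [AddCommGroup M] [DecidableEq M] (f : F → M)
    (hadd : ∀ x y, f (x + y) = f x + f y) {u v : M}
    (hu : u ∈ (univ : Finset F).image f) (hv : v ∈ (univ : Finset F).image f) :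
    ((univ : Finset F).filter (fun x => f x = u)).card
      = ((univ : Finset F).filter (fun x => f x = v)).card := by
  obtain ⟨xu, -, hxu⟩ := Finset.mem_image.1 hu
  obtain ⟨xv, -, hxv⟩ := Finset.mem_image.1 hv
  set φ : F →+ M := AddMonoidHom.mk' f hadd with hφ
  have hfs : ∀ x y : F, f (x - y) = f x - f y := fun x y => map_sub φ x y
  apply Finset.card_bij (fun x _ => x - xu + xv)
  · intro a ha
    simp only [Finset.mem_filter, Finset.mem_univ, true_and] at ha ⊢
    rw [hadd, hfs, ha, hxu, hxv]; abel
  · intro a _ b _ h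
    linear_combination h
  · intro b hb
    simp only [Finset.mem_filter, Finset.mem_univ, true_and] at hb
    refine ⟨b - xv + xu, ?_, by ring⟩
    simp only [Finset.mem_filter, Finset.mem_univ, true_and]
    rw [hadd, hfs, hb, hxu, hxv]; abel

lemma fiber_card_mul {M : Type*} [AddCommGroup M] [DecidableEq M] (f : F → M)
    (hadd : ∀ x y, f (x + y) = f x + f y) {u : M}
    (hu : u ∈ (univ : Finset F).image f) :
    ((univ : Finset F).image f).card
        * ((univ : Finset F).filter (fun x => f x = u)).card
      = Fintype.card F := by
  have h := Finset.card_eq_sum_card_image f (univ : Finset F)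
  rw [Finset.sum_congr rfl
    (fun b hb => fiber_card_eq f hadd hb hu : ∀ b ∈ (univ : Finset F).image f, _)] at h
  rw [Finset.sum_const, smul_eq_mul] at h
  exact h.symm


lemma tr_surj (hq2 : 2 ≤ q) (hl : 1 ≤ l) (hcard : Fintype.card F = q ^ l)
    (hfrob : ∀ x y : F, (x + y) ^ q = x ^ q + y ^ q)
    {a : F} (ha : a ^ q = a) : ∃ x : F, relTrace q l x = a := by
  have h1 : ∃ x0 : F, relTrace q l x0 ≠ 0 := by
    by_contra h
    push_neg at h
    have : (1 : F) = 0 := trc_zero hq2 hl hcard (fun x => by simpa using h x)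
    exact one_ne_zero this
  obtain ⟨x0, ht⟩ := h1
  set t := relTrace q l x0 with htdef
  have htfix : t ^ q = t := tr_fix hfrob hcard x0
  have hfix2 : (a * t⁻¹) ^ q = a * t⁻¹ := by
    rw [mul_pow, inv_pow, ha, htfix]
  refine ⟨a * t⁻¹ * x0, ?_⟩
  rw [tr_smul hfix2, ← htdef]
  field_simp

lemma tr_image (hq2 : 2 ≤ q) (hl : 1 ≤ l) (hcard : Fintype.card F = q ^ l)
    (hfrob : ∀ x y : F, (x + y) ^ q = x ^ q + y ^ q) :
    (univ : Finset F).image (relTrace q l)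
      = (univ : Finset F).filter (fun a => a ^ q = a) := by
  ext a
  simp only [Finset.mem_image, Finset.mem_filter, Finset.mem_univ, true_and]
  constructor
  · rintro ⟨x, -, rfl⟩
    exact tr_fix hfrob hcard x
  · intro ha
    obtain ⟨x, hx⟩ := tr_surj hq2 hl hcard hfrob ha
    exact ⟨x, hx⟩

lemma count1 (hq2 : 2 ≤ q) (hl : 1 ≤ l) (hcard : Fintype.card F = q ^ l)
    (hfrob : ∀ x y : F, (x + y) ^ q = x ^ q + y ^ q)
    (hBcard : ((univ : Finset F).filter (fun a => a ^ q = a)).card = q) :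
    ((univ : Finset F).filter (fun x => relTrace q l x = 1)).card = q ^ (l - 1) := by
  have h1mem : (1 : F) ∈ (univ : Finset F).image (relTrace q l) := by
    obtain ⟨x, hx⟩ := tr_surj hq2 hl hcard hfrob (one_pow q)
    exact Finset.mem_image.2 ⟨x, Finset.mem_univ x, hx⟩
  have h := fiber_card_mul (relTrace q l) (tr_add hfrob) h1mem
  rw [tr_image hq2 hl hcard hfrob, hBcard, hcard] at h
  have hql : q ^ l = q * q ^ (l - 1) := by
    conv_lhs => rw [show l = 1 + (l - 1) by omega]
    rw [pow_add, pow_one]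
  rw [hql] at h
  exact Nat.eq_of_mul_eq_mul_left (by omega) h

lemma count2 (hfrob : ∀ x y : F, (x + y) ^ q = x ^ q + y ^ q)
    {c : F} (hcfix : c ^ q = c) (hc1 : c ≠ 1) :
    ((univ : Finset F).filter
      (fun x => relTrace q l x = 1 ∧ relTrace q l (c * x) = 1)).card = 0 := by
  rw [Finset.card_eq_zero, Finset.filter_eq_empty_iff]
  rintro x - ⟨h1, h2⟩
  rw [tr_smul hcfix, h1, mul_one] at h2
  exact hc1 h2

lemma count3 (hq2 : 2 ≤ q) (hl : 1 ≤ l) (hcard : Fintype.card F = q ^ l)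
    (hfrob : ∀ x y : F, (x + y) ^ q = x ^ q + y ^ q)
    (hBcard : ((univ : Finset F).filter (fun a => a ^ q = a)).card = q)
    {c : F} (hcfix : ¬ c ^ q = c) :
    ((univ : Finset F).filter
      (fun x => relTrace q l x = 1 ∧ relTrace q l (c * x) = 1)).card
      = q ^ (l - 2) := by
  set B := (univ : Finset F).filter (fun a => a ^ q = a) with hB
  set Φ : F → F × F := fun x => (relTrace q l x, relTrace q l (c * x)) with hΦ
  have hΦadd : ∀ x y : F, Φ (x + y) = Φ x + Φ y := by
    intro x y
    apply Prod.ext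
    · simpa [hΦ] using tr_add hfrob x y
    · simpa [hΦ, mul_add] using tr_add hfrob (c * x) (c * y)
  obtain ⟨x0, hx0⟩ := tr_surj hq2 hl hcard hfrob (one_pow q)
  set lam := relTrace q l (c * x0) with hlam
  have hlamfix : lam ^ q = lam := tr_fix hfrob hcard (c * x0)
  -- there is y with tr y = 0 and tr (c y) ≠ 0
  have s2 : ∃ y : F, relTrace q l y = 0 ∧ relTrace q l (c * y) ≠ 0 := by
    by_contra h
    push_neg at h
    have hkey : ∀ x : F, relTrace q l ((c - lam) * x) = 0 := by
      intro x
      have hfixTx : (relTrace q l x) ^ q = relTrace q l x := tr_fix hfrob hcard x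
      have hy : relTrace q l (x - relTrace q l x * x0) = 0 := by
        rw [tr_sub hfrob, tr_smul hfixTx, hx0, mul_one, sub_self]
      have h2 := h _ hy
      have hc2 : c * (x - relTrace q l x * x0)
          = c * x - relTrace q l x * (c * x0) := by ring
      rw [hc2, tr_sub hfrob, tr_smul hfixTx] at h2
      have hc3 : (c - lam) * x = c * x - lam * x := by ring
      rw [hc3, tr_sub hfrob, tr_smul hlamfix]
      linear_combination h2
    have h4 : c - lam = 0 := trc_zero hq2 hl hcard hkey
    have h5 : c = lam := by linear_combination h4
    exact hcfix (h5 ▸ hlamfix)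
  obtain ⟨y, hy0, hmu⟩ := s2
  set mu := relTrace q l (c * y) with hmud
  have hmufix : mu ^ q = mu := tr_fix hfrob hcard (c * y)
  -- image of Φ is B ×ˢ B
  have himg : (univ : Finset F).image Φ = B ×ˢ B := by
    ext ab
    obtain ⟨a, b⟩ := ab
    simp only [Finset.mem_image, Finset.mem_product, hB, Finset.mem_filter,
      Finset.mem_univ, true_and, hΦ, Prod.mk.injEq]
    constructor
    · rintro ⟨x, h1, h2⟩
      subst h1; subst h2
      exact ⟨tr_fix hfrob hcard x, tr_fix hfrob hcard (c * x)⟩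
    · rintro ⟨ha, hb⟩
      set t := (b - a * lam) * mu⁻¹ with htd
      have htfix : t ^ q = t := by
        rw [htd, mul_pow, inv_pow, frob_sub hfrob, mul_pow, hb, ha, hlamfix, hmufix]
      refine ⟨a * x0 + t * y, ?_, ?_⟩
      · rw [tr_add hfrob, tr_smul ha, tr_smul htfix, hx0, hy0, mul_one, mul_zero,
          add_zero]
      · have hrw : c * (a * x0 + t * y) = a * (c * x0) + t * (c * y) := by ring
        rw [hrw, tr_add hfrob, tr_smul ha, tr_smul htfix, ← hlam, ← hmud, htd]
        field_simp
        ring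
  have h11 : ((1 : F), (1 : F)) ∈ (univ : Finset F).image Φ := by
    rw [himg]
    have h1B : (1 : F) ∈ B := by simp [hB]
    exact Finset.mem_product.2 ⟨h1B, h1B⟩
  have h := fiber_card_mul Φ hΦadd h11
  rw [himg, Finset.card_product, hBcard, hcard] at h
  -- l ≥ 2
  have hl2 : 2 ≤ l := by
    by_contra hlt
    have hl1 : l = 1 := by omega
    have : B = univ := Finset.eq_univ_of_card B (by rw [hBcard, hcard, hl1, pow_one])
    have : c ∈ B := this ▸ Finset.mem_univ c
    rw [hB, Finset.mem_filter] at this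
    exact hcfix this.2
  have hql : q ^ l = q * q * (q ^ (l - 2)) := by
    conv_lhs => rw [show l = 2 + (l - 2) by omega]
    rw [pow_add]; ring
  rw [hql] at h
  have hfilter : ((univ : Finset F).filter
        (fun x => relTrace q l x = 1 ∧ relTrace q l (c * x) = 1))
      = (univ : Finset F).filter (fun x => Φ x = (1, 1)) := by
    ext x
    simp only [Finset.mem_filter, Finset.mem_univ, true_and, hΦ, Prod.mk.injEq]
  rw [hfilter]
  exact Nat.eq_of_mul_eq_mul_left (by positivity) h


lemma unit_count (hq2 : 2 ≤ q) (c : F) :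
    ((univ : Finset Fˣ).filter (fun x : Fˣ => relTrace q l (x : F) = 1
        ∧ relTrace q l (c * (x : F)) = 1)).card
      = ((univ : Finset F).filter (fun x => relTrace q l x = 1
        ∧ relTrace q l (c * x) = 1)).card := by
  refine Finset.card_bij (fun (x : Fˣ) _ => (x : F)) ?_ ?_ ?_
  · intro a ha
    simp only [Finset.mem_filter, Finset.mem_univ, true_and] at ha ⊢
    exact ha
  · intro a _ b _ h
    exact Units.ext h
  · intro b hb
    simp only [Finset.mem_filter, Finset.mem_univ, true_and] at hb
    have hb0 : b ≠ 0 := by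
      rintro rfl
      rw [tr_zero hq2] at hb
      exact zero_ne_one hb.1
    refine ⟨Units.mk0 b hb0, ?_, rfl⟩
    simp only [Finset.mem_filter, Finset.mem_univ, true_and, Units.val_mk0]
    exact hb

end Aux

section Base
variable {K F : Type*} [Field K] [Field F] [Fintype K] [Fintype F] [Algebra K F]

open Polynomial in
lemma algebra_image_eq (q l : ℕ) (hq : Fintype.card K = q)
    (hF : Fintype.card F = q ^ l) :
    (univ : Finset K).image (algebraMap K F)
      = (univ : Finset F).filter (fun a => a ^ q = a) := by
  have hq2 : 2 ≤ q := by rw [← hq]; exact Fintype.one_lt_card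
  have hinj : Function.Injective (algebraMap K F) := (algebraMap K F).injective
  have hsub : (univ : Finset K).image (algebraMap K F)
      ⊆ (univ : Finset F).filter (fun a => a ^ q = a) := by
    intro a ha
    obtain ⟨y, -, rfl⟩ := Finset.mem_image.1 ha
    simp only [Finset.mem_filter, Finset.mem_univ, true_and]
    rw [← map_pow, ← hq, FiniteField.pow_card]
  have hcardimg : ((univ : Finset K).image (algebraMap K F)).card = q := by
    rw [Finset.card_image_of_injective _ hinj, Finset.card_univ, hq]
  set P : F[X] := X ^ q - X with hP
  have hPne : P ≠ 0 := by
    intro h0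
    have h1 : P.coeff q = 1 := by
      rw [hP, coeff_sub, coeff_X_pow, if_pos rfl, coeff_X,
        if_neg (by omega : ¬ 1 = q), sub_zero]
    rw [h0, coeff_zero] at h1
    exact one_ne_zero h1.symm
  have hdeg : P.natDegree ≤ q := by
    rw [hP, natDegree_sub_eq_left_of_natDegree_lt, natDegree_X_pow]
    rw [natDegree_X, natDegree_X_pow]; omega
  have hfsub : (univ : Finset F).filter (fun a => a ^ q = a)
      ⊆ P.roots.toFinset := by
    intro a ha
    simp only [Finset.mem_filter, Finset.mem_univ, true_and] at ha
    simp only [Multiset.mem_toFinset, mem_roots, hPne, ne_eq, not_false_eq_true,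
      true_and]
    simp [hP, IsRoot, ha]
  have hcardle : ((univ : Finset F).filter (fun a => a ^ q = a)).card ≤ q :=
    le_trans (Finset.card_le_card hfsub)
      (le_trans (Multiset.toFinset_card_le _) (le_trans (card_roots' P) hdeg))
  exact (Finset.eq_of_subset_of_card_le hsub (by omega)).symm ▸ rfl

end Base


/-- `R = {x ∈ 𝔽_{q^l}^* : tr_{q^l/q}(x) = 1}` is a
`((q^l-1)/(q-1), q-1, q^{l-1}, q^{l-2})`-relative difference set in `𝔽_{q^l}^*`
relative to `𝔽_q^*`, i.e. `R R^{(-1)} = q^{l-1}·1 + q^{l-2}(𝔽_{q^l}^* - 𝔽_q^*)`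
in `ℤ[𝔽_{q^l}^*]`. -/
theorem stmt6 {K F : Type*} [Field K] [Field F] [Fintype K] [Fintype F]
    [Algebra K F] (q l : ℕ) (hq : Fintype.card K = q)
    (hF : Fintype.card F = q ^ l) (hl : 1 ≤ l) :
    fsum (singerRDS F q l) * fsum (singerRDS F q l)⁻¹ =
      ((q : ℤ) ^ (l - 1)) • 1 +
        ((q : ℤ) ^ (l - 2)) •
          (fsum (univ : Finset Fˣ) - fsum (baseUnits K F)) := by
  classical
  have hq2 : 2 ≤ q := by rw [← hq]; exact Fintype.one_lt_card
  -- characteristic and Frobenius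
  haveI : CharP K (ringChar K) := ringChar.charP K
  obtain ⟨n, hp, hcardK⟩ := FiniteField.card K (ringChar K)
  haveI : Fact (Nat.Prime (ringChar K)) := ⟨hp⟩
  haveI : CharP F (ringChar K) :=
    charP_of_injective_ringHom (algebraMap K F).injective _
  have hqpn : q = ringChar K ^ (n : ℕ) := by rw [← hq, hcardK]
  have hfrob : ∀ x y : F, (x + y) ^ q = x ^ q + y ^ q := by
    intro x y
    rw [hqpn]
    exact add_pow_char_pow x y _ _
  have himgB := algebra_image_eq q l hq hF
  have hBcard : ((univ : Finset F).filter (fun a => a ^ q = a)).card = q := by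
    rw [← himgB, Finset.card_image_of_injective _ (algebraMap K F).injective,
      Finset.card_univ, hq]
  set R := singerRDS F q l with hR
  -- expand the product
  have hRinv : fsum R⁻¹ = ∑ y ∈ R, MonoidAlgebra.single y⁻¹ (1 : ℤ) := by
    rw [show R⁻¹ = R.image (·⁻¹) from rfl, fsum]
    exact Finset.sum_image (fun a _ b _ h => inv_injective h)
  rw [fsum, hRinv, Finset.sum_mul_sum]
  simp only [MonoidAlgebra.single_mul_single, mul_one]
  refine MonoidAlgebra.ext (Finsupp.ext fun g => ?_)
  -- LHS coefficient at g
  have hL : (∑ i ∈ R, ∑ j ∈ R, MonoidAlgebra.single (i * j⁻¹) (1 : ℤ)).coeff g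
      = ((R.filter (fun x => g⁻¹ * x ∈ R)).card : ℤ) := by
    rw [MonoidAlgebra.coeff_sum, Finset.sum_apply']
    have step1 : ∀ x ∈ R, (∑ j ∈ R, MonoidAlgebra.single (x * j⁻¹) (1 : ℤ)).coeff g
        = if g⁻¹ * x ∈ R then (1 : ℤ) else 0 := by
      intro x _
      rw [MonoidAlgebra.coeff_sum, Finset.sum_apply']
      rw [Finset.sum_congr rfl (fun y _ => ?_),
        Finset.sum_ite_eq' R (g⁻¹ * x) (fun _ => (1 : ℤ))]
      show (MonoidAlgebra.single (x * y⁻¹) (1 : ℤ)).coeff g = _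
      rw [MonoidAlgebra.single_apply]
      exact if_congr ⟨fun h => by rw [← h]; group, fun h => by rw [h]; group⟩
        rfl rfl
    rw [Finset.sum_congr rfl step1, Finset.sum_boole]
  rw [hL]
  -- RHS coefficient at g
  have hRHS : (((q : ℤ) ^ (l - 1)) • (1 : MonoidAlgebra ℤ Fˣ) +
      ((q : ℤ) ^ (l - 2)) • (fsum (univ : Finset Fˣ) - fsum (baseUnits K F))).coeff g
      = (q : ℤ) ^ (l - 1) * (if g = 1 then 1 else 0) +
        (q : ℤ) ^ (l - 2) * (1 - if g ∈ baseUnits K F then 1 else 0) := by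
    have h1 : (1 : MonoidAlgebra ℤ Fˣ).coeff g = if g = 1 then 1 else 0 := by
      rw [MonoidAlgebra.one_def, MonoidAlgebra.single_apply]
      exact if_congr eq_comm rfl rfl
    have h2 : (fsum (univ : Finset Fˣ)).coeff g = 1 := by
      rw [fsum, MonoidAlgebra.coeff_sum, Finset.sum_apply']
      simp only [MonoidAlgebra.single_apply]
      rw [Finset.sum_ite_eq' (univ : Finset Fˣ) g (fun _ => (1 : ℤ)),
        if_pos (Finset.mem_univ g)]
    have h3 : (fsum (baseUnits K F)).coeff g = if g ∈ baseUnits K F then 1 else 0 := by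
      rw [fsum, MonoidAlgebra.coeff_sum, Finset.sum_apply']
      simp only [MonoidAlgebra.single_apply]
      exact Finset.sum_ite_eq' (baseUnits K F) g (fun _ => (1 : ℤ))
    rw [MonoidAlgebra.coeff_add, Finsupp.add_apply, MonoidAlgebra.coeff_smul,
      MonoidAlgebra.coeff_smul, Finsupp.smul_apply, Finsupp.smul_apply,
      MonoidAlgebra.coeff_sub, Finsupp.sub_apply, h1, h2, h3, smul_eq_mul, smul_eq_mul]
  rw [hRHS]
  -- identify the count
  have hcount : ((R.filter (fun x => g⁻¹ * x ∈ R)).card : ℤ)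
      = (((univ : Finset F).filter (fun x => relTrace q l x = 1
        ∧ relTrace q l (((g : F))⁻¹ * x) = 1)).card : ℤ) := by
    have hsets : R.filter (fun x => g⁻¹ * x ∈ R)
        = (univ : Finset Fˣ).filter (fun x : Fˣ => relTrace q l (x : F) = 1
          ∧ relTrace q l (((g : F))⁻¹ * (x : F)) = 1) := by
      ext x
      simp only [hR, singerRDS, Finset.mem_filter, Finset.mem_univ, true_and,
        Units.val_mul, Units.val_inv_eq_inv_val]
    rw [hsets, unit_count hq2 (((g : F))⁻¹)]
  rw [hcount]
  by_cases hg1 : g = 1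
  · subst hg1
    have hgB : (1 : Fˣ) ∈ baseUnits K F := by
      simp only [baseUnits, Finset.mem_filter, Finset.mem_univ, true_and]
      exact ⟨1, by simp⟩
    have heq : (univ : Finset F).filter (fun x => relTrace q l x = 1
          ∧ relTrace q l ((((1 : Fˣ) : F))⁻¹ * x) = 1)
        = (univ : Finset F).filter (fun x => relTrace q l x = 1) := by
      ext x
      simp [Units.val_one, inv_one, one_mul, and_self]
    rw [heq, count1 hq2 hl hF hfrob hBcard, if_pos rfl, if_pos hgB]
    push_cast
    ring
  · by_cases hgB : g ∈ baseUnits K F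
    · have hfixg : ((g : F)) ^ q = (g : F) := by
        simp only [baseUnits, Finset.mem_filter, Finset.mem_univ, true_and] at hgB
        obtain ⟨y, hy⟩ := hgB
        have : (g : F) ∈ (univ : Finset K).image (algebraMap K F) :=
          Finset.mem_image.2 ⟨y, Finset.mem_univ y, hy⟩
        rw [himgB, Finset.mem_filter] at this
        exact this.2
      have hfixc : (((g : F))⁻¹) ^ q = ((g : F))⁻¹ := by rw [inv_pow, hfixg]
      have hc1 : ((g : F))⁻¹ ≠ 1 := by
        intro h
        exact hg1 (Units.ext (by simpa using inv_eq_one.mp h))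
      rw [count2 hfrob hfixc hc1, if_neg hg1, if_pos hgB]
      push_cast
      ring
    · have hnfix : ¬ (((g : F))⁻¹) ^ q = ((g : F))⁻¹ := by
        intro h
        have hfixg : ((g : F)) ^ q = (g : F) := by
          have h2 : (((g : F))⁻¹)⁻¹ ^ q = (((g : F))⁻¹)⁻¹ := by
            rw [inv_pow, h]
          simpa [inv_inv] using h2
        apply hgB
        simp only [baseUnits, Finset.mem_filter, Finset.mem_univ, true_and]
        have : (g : F) ∈ (univ : Finset K).image (algebraMap K F) := by
          rw [himgB, Finset.mem_filter]
          exact ⟨Finset.mem_univ _, hfixg⟩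
        obtain ⟨y, -, hy⟩ := Finset.mem_image.1 this
        exact ⟨y, hy⟩
      rw [count3 hq2 hl hF hfrob hBcard hnfix, if_neg hg1, if_neg hgB]
      push_cast
      ring
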